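/- The ideal (t̃ − 1)·A⁰ equals the kernel of the augmentation homomorphism ε̂ : A⁰ → R; that is, an element x ∈ A⁰ satisfies ε̂(x) = 0 if and only if x = (t̃ − 1)·y for some y ∈ A⁰. -/

import Mathlib

/-- The directed set `D` of positive integers coprime to `p`. -/
def Coprimes (p : ℕ) : Type := {n : ℕ // 0 < n ∧ Nat.Coprime n p}

/-- The transition map `π_{m,n} : R[ℤ/m] → R[ℤ/n]` (for `n ∣ m`) induced by the reduction
map `ℤ/m → ℤ/n`. -/
noncomputable def transMap (R : Type*) [CommRing R] {m n : ℕ} (h : n ∣ m) :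
    AddMonoidAlgebra R (ZMod m) →+* AddMonoidAlgebra R (ZMod n) :=
  AddMonoidAlgebra.mapDomainRingHom R ((ZMod.castHom h (ZMod n)).toAddMonoidHom)

/-- The property of being a compatible family, i.e., of lying in the inverse limit
`A⁰ = lim_{n ∈ D} R[ℤ/n]`, realized inside the product ring `∏_{n ∈ D} R[ℤ/n]`. -/
def IsCompatible (R : Type*) [CommRing R] (p : ℕ)
    (x : ∀ n : Coprimes p, AddMonoidAlgebra R (ZMod n.1)) : Prop :=
  ∀ (m n : Coprimes p) (h : n.1 ∣ m.1), transMap R h (x m) = x n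

/-- The element `t̃ ∈ A⁰` whose `n`-th component is the group element `1 ∈ ℤ/n` viewed in
`R[ℤ/n]`. -/
noncomputable def ttilde (R : Type*) [CommRing R] (p : ℕ) :
    ∀ n : Coprimes p, AddMonoidAlgebra R (ZMod n.1) :=
  fun n => AddMonoidAlgebra.single (1 : ZMod n.1) (1 : R)

/-- The augmentation homomorphism `ε_n : R[ℤ/n] → R`, sending every group element to `1`. -/
noncomputable def aug (R : Type*) [CommRing R] (n : ℕ) :
    AddMonoidAlgebra R (ZMod n) →ₐ[R] R :=
  AddMonoidAlgebra.lift R R (ZMod n) 1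

/-! ### Auxiliary lemmas -/

lemma transMap_apply (R : Type*) [CommRing R] {m n : ℕ} (h : n ∣ m)
    (v : AddMonoidAlgebra R (ZMod m)) :
    transMap R h v = AddMonoidAlgebra.mapDomain (ZMod.castHom h (ZMod n)) v := rfl

lemma transMap_single (R : Type*) [CommRing R] {m n : ℕ} (h : n ∣ m) (a : ZMod m) (b : R) :
    transMap R h (AddMonoidAlgebra.single a b)
      = AddMonoidAlgebra.single (ZMod.castHom h (ZMod n) a) b := by
  simp [transMap_apply, AddMonoidAlgebra.mapDomain_single]

lemma transMap_id (R : Type*) [CommRing R] {n : ℕ} (h : n ∣ n)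
    (v : AddMonoidAlgebra R (ZMod n)) : transMap R h v = v := by
  rw [transMap_apply, AddMonoidAlgebra.mapDomain]
  have : (ZMod.castHom h (ZMod n) : ZMod n → ZMod n) = id := by
    rw [ZMod.castHom_self]; rfl
  rw [this, Finsupp.mapDomain_id]

lemma transMap_comp (R : Type*) [CommRing R] {k m n : ℕ} (h1 : n ∣ m) (h2 : m ∣ k)
    (v : AddMonoidAlgebra R (ZMod k)) :
    transMap R h1 (transMap R h2 v) = transMap R (h1.trans h2) v := by
  simp only [transMap_apply, AddMonoidAlgebra.mapDomain, AddMonoidAlgebra.coeff_ofCoeff]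
  rw [← Finsupp.mapDomain_comp]
  have : (ZMod.castHom (h1.trans h2) (ZMod n) : ZMod k → ZMod n)
      = (ZMod.castHom h1 (ZMod n)) ∘ (ZMod.castHom h2 (ZMod m)) := by
    rw [← RingHom.coe_comp, ZMod.castHom_comp]
  rw [this]

lemma aug_single (R : Type*) [CommRing R] (n : ℕ) (a : ZMod n) (b : R) :
    aug R n (AddMonoidAlgebra.single a b) = b := by
  simp [aug, AddMonoidAlgebra.lift_single]

/-- Key surjectivity lemma: every element of the augmentation ideal of `R[ℤ/n]` is a
multiple of `t - 1`. -/
lemma exists_y (R : Type*) [CommRing R] {n : ℕ} [NeZero n]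
    (v : AddMonoidAlgebra R (ZMod n)) (hv : aug R n v = 0) :
    ∃ y, (AddMonoidAlgebra.single (1 : ZMod n) (1 : R) - 1) * y = v := by
  set t : AddMonoidAlgebra R (ZMod n) := AddMonoidAlgebra.single (1 : ZMod n) (1 : R) with ht
  have haug : (∑ g : ZMod n, v.coeff g) = 0 := by
    have := hv
    conv_lhs at this => rw [← (show ∑ g : ZMod n, AddMonoidAlgebra.single g (v.coeff g) = v from AddMonoidAlgebra.ext (by rw [AddMonoidAlgebra.coeff_sum]; simp only [AddMonoidAlgebra.coeff_single]; exact Finsupp.univ_sum_single _))]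
    rw [map_sum] at this
    simpa [aug_single] using this
  refine ⟨∑ g : ZMod n, AddMonoidAlgebra.single (0 : ZMod n) (v.coeff g)
      * (∑ i ∈ Finset.range (ZMod.val g), t ^ i), ?_⟩
  have key : ∀ g : ZMod n, (t - 1) * (AddMonoidAlgebra.single (0 : ZMod n) (v.coeff g)
      * (∑ i ∈ Finset.range (ZMod.val g), t ^ i))
      = AddMonoidAlgebra.single g (v.coeff g) - AddMonoidAlgebra.single (0 : ZMod n) (v.coeff g) := by
    intro g
    have hgeom : (∑ i ∈ Finset.range (ZMod.val g), t ^ i) * (t - 1)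
        = t ^ (ZMod.val g) - 1 := geom_sum_mul t (ZMod.val g)
    have htpow : t ^ (ZMod.val g) = AddMonoidAlgebra.single g (1 : R) := by
      rw [ht, AddMonoidAlgebra.single_pow]
      congr 1
      · rw [nsmul_eq_mul, mul_one]
        exact ZMod.natCast_rightInverse g
      · exact one_pow _
    calc (t - 1) * (AddMonoidAlgebra.single (0 : ZMod n) (v.coeff g)
          * (∑ i ∈ Finset.range (ZMod.val g), t ^ i))
        = AddMonoidAlgebra.single (0 : ZMod n) (v.coeff g)
          * ((∑ i ∈ Finset.range (ZMod.val g), t ^ i) * (t - 1)) := by ring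
      _ = AddMonoidAlgebra.single (0 : ZMod n) (v.coeff g)
          * (AddMonoidAlgebra.single g (1 : R) - 1) := by rw [hgeom, htpow]
      _ = _ := by
          rw [mul_sub, mul_one, AddMonoidAlgebra.single_mul_single, zero_add, mul_one]
  rw [Finset.mul_sum]
  simp_rw [key]
  rw [Finset.sum_sub_distrib]
  have h1 : ∑ g : ZMod n, AddMonoidAlgebra.single g (v.coeff g) = v :=
    AddMonoidAlgebra.ext (by rw [AddMonoidAlgebra.coeff_sum]; simp only [AddMonoidAlgebra.coeff_single]; exact Finsupp.univ_sum_single _)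
  have h2 : ∑ g : ZMod n, AddMonoidAlgebra.single (0 : ZMod n) (v.coeff g)
      = AddMonoidAlgebra.single (0 : ZMod n) (∑ g : ZMod n, v.coeff g) := by
    exact (map_sum (AddMonoidAlgebra.singleAddHom (0 : ZMod n)) _ _).symm
  rw [h1, h2, haug]
  simp

instance (p : ℕ) : Preorder (Coprimes p) where
  le a b := a.1 ∣ b.1
  le_refl a := dvd_rfl
  le_trans a b c h1 h2 := dvd_trans h1 h2

lemma Coprimes.le_def {p : ℕ} {a b : Coprimes p} : a ≤ b ↔ a.1 ∣ b.1 := Iff.rfl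

instance (p : ℕ) : IsDirected (Coprimes p) (· ≤ ·) :=
  ⟨fun a b => ⟨⟨a.1 * b.1, Nat.mul_pos a.2.1 b.2.1, Nat.Coprime.mul a.2.2 b.2.2⟩,
    Coprimes.le_def.mpr (dvd_mul_right _ _), Coprimes.le_def.mpr (dvd_mul_left _ _)⟩⟩

instance finsuppFinite {α M : Type*} [Finite α] [Zero M] [Finite M] : Finite (α →₀ M) :=
  Finite.of_injective (fun f => (f : α → M)) (DFunLike.coe_injective)

open CategoryTheory Opposite in
/-- The inverse system of fibers `{y ∈ R[ℤ/n] : (t-1)y = x_n}`. -/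
noncomputable def sysF (R : Type*) [CommRing R] (p : ℕ)
    (x : ∀ n : Coprimes p, AddMonoidAlgebra R (ZMod n.1)) (hx : IsCompatible R p x) :
    (Coprimes p)ᵒᵖ ⥤ Type _ where
  obj j := {y : AddMonoidAlgebra R (ZMod j.unop.1) //
    (AddMonoidAlgebra.single (1 : ZMod j.unop.1) (1 : R) - 1) * y = x j.unop}
  map {j j'} f := TypeCat.ofHom fun y => ⟨transMap R (Coprimes.le_def.mp (leOfHom f.unop)) y.1, by
    have h : (j'.unop).1 ∣ (j.unop).1 := Coprimes.le_def.mp (leOfHom f.unop)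
    have h2 := congrArg (transMap R h) y.2
    rw [map_mul, map_sub, map_one, transMap_single, map_one, hx _ _ h] at h2
    exact h2⟩
  map_id j := by
    ext y : 3
    exact Subtype.ext (transMap_id R _ y.1)
  map_comp {j j' j''} f g := by
    ext y : 3
    exact Subtype.ext (transMap_comp R _ _ y.1).symm

open CategoryTheory Opposite

theorem stmt12 (R : Type*) [CommRing R] [Finite R] [Nontrivial R]
    (ℓ r : ℕ) (hℓ : ℓ.Prime) (hr : 1 ≤ r) (hR : (ℓ : R) ^ r = 0)
    (p : ℕ) (hp : p = 1 ∨ (p.Prime ∧ p ≠ ℓ))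
    (x : ∀ n : Coprimes p, AddMonoidAlgebra R (ZMod n.1))
    (hx : IsCompatible R p x) :
    (∀ n : Coprimes p, aug R n.1 (x n) = 0) ↔
      ∃ y : ∀ n : Coprimes p, AddMonoidAlgebra R (ZMod n.1),
        IsCompatible R p y ∧ x = (ttilde R p - 1) * y := by
  constructor
  · intro h
    haveI hFin : ∀ j : (Coprimes p)ᵒᵖ, Finite ((sysF R p x hx).obj j) := fun j => by
      haveI : NeZero j.unop.1 := ⟨j.unop.2.1.ne'⟩
      haveI : Finite (AddMonoidAlgebra R (ZMod j.unop.1)) :=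
        Finite.of_equiv _ AddMonoidAlgebra.coeffEquiv.symm
      exact Subtype.finite
    haveI hNe : ∀ j : (Coprimes p)ᵒᵖ, Nonempty ((sysF R p x hx).obj j) := fun j => by
      haveI : NeZero j.unop.1 := ⟨j.unop.2.1.ne'⟩
      obtain ⟨y, hy⟩ := exists_y R (x j.unop) (h j.unop)
      exact ⟨⟨y, hy⟩⟩
    obtain ⟨u, hu⟩ := nonempty_sections_of_finite_inverse_system (sysF R p x hx)
    refine ⟨fun n => (u (op n)).1, ?_, ?_⟩
    · intro m n hdvd
      have f : op m ⟶ op n := (homOfLE (Coprimes.le_def.mpr hdvd)).op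
      have h2 := hu f
      exact congrArg Subtype.val h2
    · funext n
      have h2 := (u (op n)).2
      show x n = (ttilde R p - 1) n * (u (op n)).1
      rw [Pi.sub_apply, Pi.one_apply]
      exact h2.symm
  · rintro ⟨y, hy, hxy⟩ n
    rw [hxy, Pi.mul_apply, Pi.sub_apply, Pi.one_apply, map_mul, map_sub, map_one]
    have : aug R n.1 (ttilde R p n) = 1 := aug_single R n.1 1 1
    rw [this]
    ring
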